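/- Every Eulerian (connected, all degrees even) multigraph G with a distinguished vertex z has a spanning subgraph H such that d_H(v) = d_G(v)/2 for every vertex v ≠ z, and d_H(z) ∈ {d_G(z)/2, d_G(z)/2 + 1}. -/

import Mathlib

namespace MG

variable {V E : Type} [Fintype V] [Fintype E] [DecidableEq V] [DecidableEq E]

/-- Degree of `v` in the spanning subgraph with edge set `S`; loops count twice. -/
def deg (ends : E → V × V) (S : Finset E) (v : V) : ℕ :=
  (S.filter fun e => (ends e).1 = v).card + (S.filter fun e => (ends e).2 = v).card

/-- Edges of `S` with exactly one end in `A`. -/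
def cut (ends : E → V × V) (S : Finset E) (A : Finset V) : Finset E :=
  S.filter fun e => ¬ (((ends e).1 ∈ A) ↔ ((ends e).2 ∈ A))

/-- Edges of `S` with both ends in `A`. -/
def inside (ends : E → V × V) (S : Finset E) (A : Finset V) : Finset E :=
  S.filter fun e => (ends e).1 ∈ A ∧ (ends e).2 ∈ A

/-- `m`-edge-connected: every edge cut has at least `m` edges. -/
def EdgeConn (ends : E → V × V) (m : ℕ) : Prop :=
  ∀ A : Finset V, A.Nonempty → A ≠ Finset.univ → m ≤ (cut ends Finset.univ A).card

/-- Essentially `lam`-edge-connected: every edge cut of size `< lam` has all its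
edges incident with one common vertex. -/
def EssEdgeConn (ends : E → V × V) (lam : ℕ) : Prop :=
  ∀ A : Finset V, A.Nonempty → A ≠ Finset.univ →
    (cut ends Finset.univ A).card < lam →
      ∃ v : V, ∀ e ∈ cut ends Finset.univ A, (ends e).1 = v ∨ (ends e).2 = v

/-- The edge set `S` induces a bipartite graph. -/
def BipOn (ends : E → V × V) (S : Finset E) : Prop :=
  ∃ X : Finset V, ∀ e ∈ S, ¬ (((ends e).1 ∈ X) ↔ ((ends e).2 ∈ X))

/-- Edges of `S` not crossing the bipartition `(X, Xᶜ)`. -/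
def bad (ends : E → V × V) (S : Finset E) (X : Finset V) : Finset E :=
  S.filter fun e => (((ends e).1 ∈ X) ↔ ((ends e).2 ∈ X))

/-- The bipartite index: fewest edge deletions making the graph `(V, S)` bipartite. -/
def biIndexOn (ends : E → V × V) (S : Finset E) : ℕ :=
  Finset.univ.inf' Finset.univ_nonempty fun X : Finset V => (bad ends S X).card

/-- Adjacency via an edge of `S`. -/
def adjOn (ends : E → V × V) (S : Finset E) (a b : V) : Prop :=
  ∃ e ∈ S, ends e = (a, b) ∨ ends e = (b, a)

/-- The spanning subgraph with edge set `S` is connected. -/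
def ConnOn (ends : E → V × V) (S : Finset E) : Prop :=
  ∀ a b : V, Relation.ReflTransGen (adjOn ends S) a b

/-- `T` is the edge set of a spanning tree. -/
def IsSpTree (ends : E → V × V) (T : Finset E) : Prop :=
  ConnOn ends T ∧ T.card + 1 = Fintype.card V

/-- `m`-tree-connected inside `S`: `m` pairwise edge-disjoint spanning trees using edges of `S`. -/
def TreeConnOn (ends : E → V × V) (m : ℕ) (S : Finset E) : Prop :=
  ∃ T : Fin m → Finset E, (∀ i, T i ⊆ S ∧ IsSpTree ends (T i)) ∧
    ∀ i j, i ≠ j → Disjoint (T i) (T j)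

/-- `C` is the edge set of an odd cycle: odd, nonempty, 2-regular on its support and
connected on its support. -/
def IsOddCycle (ends : E → V × V) (C : Finset E) : Prop :=
  C.Nonempty ∧ Odd C.card ∧ (∀ v : V, deg ends C v = 0 ∨ deg ends C v = 2) ∧
    ∀ a b : V, 0 < deg ends C a → 0 < deg ends C b →
      Relation.ReflTransGen (adjOn ends C) a b

/-- `f` is compatible with the graph with respect to the bipartition `(X, Xᶜ)`. -/
def CompatAt (ends : E → V × V) {k : ℕ} (f : V → ZMod k) (X : Finset V) : Prop :=
  (∃ x : ℕ, x ≤ (inside ends Finset.univ X).card ∧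
    (∑ v ∈ X, f v) - ((2 * x : ℕ) : ZMod k) = ∑ v ∈ Xᶜ, f v) ∨
  (∃ y : ℕ, y ≤ (inside ends Finset.univ Xᶜ).card ∧
    (∑ v ∈ X, f v) = (∑ v ∈ Xᶜ, f v) - ((2 * y : ℕ) : ZMod k))

end MG

open MG Finset

namespace EulerAux

variable {V E : Type} [Fintype V] [Fintype E] [DecidableEq V] [DecidableEq E]

/-- Number of end-incidences of edge `e` at `v` (2 for a loop). -/
def ind (ends : E → V × V) (e : E) (v : V) : ℕ :=
  (if (ends e).1 = v then 1 else 0) + (if (ends e).2 = v then 1 else 0)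

lemma deg_empty (ends : E → V × V) (v : V) : deg ends (∅ : Finset E) v = 0 := by
  simp [deg]

lemma deg_insert (ends : E → V × V) {e : E} {S : Finset E} (he : e ∉ S) (v : V) :
    deg ends (insert e S) v = ind ends e v + deg ends S v := by
  unfold deg ind
  have h1 : e ∉ S.filter fun e => (ends e).1 = v := fun hc => he (Finset.mem_filter.mp hc).1
  have h2 : e ∉ S.filter fun e => (ends e).2 = v := fun hc => he (Finset.mem_filter.mp hc).1
  by_cases hf : (ends e).1 = v <;> by_cases hs : (ends e).2 = v <;>
    simp [Finset.filter_insert, hf, hs, Finset.card_insert_of_notMem, h1, h2] <;> omega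

lemma deg_union (ends : E → V × V) {S T : Finset E} (h : Disjoint S T) (v : V) :
    deg ends (S ∪ T) v = deg ends S v + deg ends T v := by
  unfold deg
  rw [Finset.filter_union, Finset.filter_union,
    Finset.card_union_of_disjoint (Finset.disjoint_filter_filter h),
    Finset.card_union_of_disjoint (Finset.disjoint_filter_filter h)]
  omega

lemma deg_sdiff_add (ends : E → V × V) {S : Finset E} (v : V) :
    deg ends (Finset.univ \ S) v + deg ends S v = deg ends Finset.univ v := by
  have h : Disjoint (Finset.univ \ S) S := Finset.sdiff_disjoint
  rw [← deg_union ends h v, Finset.sdiff_union_of_subset (Finset.subset_univ S)]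

lemma exists_edge (ends : E → V × V) {S : Finset E} {v : V} (h : 0 < deg ends S v) :
    ∃ e ∈ S, (ends e).1 = v ∨ (ends e).2 = v := by
  by_contra hc
  push_neg at hc
  have h1 : S.filter (fun e => (ends e).1 = v) = ∅ := by
    apply Finset.filter_eq_empty_iff.mpr; intro e he; exact fun hh => (hc e he).1 hh
  have h2 : S.filter (fun e => (ends e).2 = v) = ∅ := by
    apply Finset.filter_eq_empty_iff.mpr; intro e he; exact fun hh => (hc e he).2 hh
  unfold deg at h
  rw [h1, h2] at h
  simp at h

lemma ind_eq (ends : E → V × V) {e : E} {a b : V}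
    (h : ends e = (a, b) ∨ ends e = (b, a)) (v : V) :
    ind ends e v = (if a = v then 1 else 0) + (if b = v then 1 else 0) := by
  rcases h with h | h <;> rw [ind, h] <;>
    by_cases ha : a = v <;> by_cases hb : b = v <;> simp [ha, hb] <;>
    first
      | omega
      | (intro hh; exact absurd hh.symm (by assumption))
      | (exact fun hh => absurd hh.symm (by assumption))

/-- A trail from `a` to `c` along the (distinct) edges in `l`. -/
inductive Trail (ends : E → V × V) : V → V → List E → Prop
  | nil (v : V) : Trail ends v v []
  | cons {a b c : V} {e : E} {l : List E} :
      (ends e = (a, b) ∨ ends e = (b, a)) → Trail ends b c l → e ∉ l →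
      Trail ends a c (e :: l)

lemma Trail.nodup {ends : E → V × V} {a c : V} {l : List E} (h : Trail ends a c l) :
    l.Nodup := by
  induction h with
  | nil => exact List.nodup_nil
  | cons hor ht hne ih => exact List.nodup_cons.mpr ⟨hne, ih⟩

lemma Trail.append {ends : E → V × V} {a b c : V} {l1 l2 : List E}
    (h1 : Trail ends a b l1) (h2 : Trail ends b c l2) (hd : ∀ x ∈ l1, x ∉ l2) :
    Trail ends a c (l1 ++ l2) := by
  induction h1 with
  | nil => simpa using h2
  | cons hor ht hne ih =>
    refine Trail.cons hor (ih h2 (fun x hx => hd x (List.mem_cons_of_mem _ hx))) ?_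
    intro hmem
    rcases List.mem_append.mp (by simpa using hmem) with h | h
    · exact hne h
    · exact hd _ List.mem_cons_self h

lemma Trail.parity {ends : E → V × V} {a c : V} {l : List E} (h : Trail ends a c l) (v : V) :
    Even (deg ends l.toFinset v + (if a = v then 1 else 0) + (if c = v then 1 else 0)) := by
  induction h with
  | nil w =>
    rw [List.toFinset_nil, deg_empty]
    by_cases hw : w = v <;> simp [hw]
  | cons hor ht hne ih =>
    rename_i a b c e l
    rw [List.toFinset_cons, deg_insert ends (by simpa using hne), ind_eq ends hor]
    rcases ih with ⟨r, hr⟩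
    by_cases ha : a = v <;> simp only [ha, if_true, if_false] <;>
      [ (exact ⟨r + 1, by omega⟩) ; (exact ⟨r, by omega⟩) ]

lemma even_of_parity {n a : ℕ} (h : Even (n + a + a)) : Even n := by
  rcases h with ⟨r, hr⟩
  exact ⟨r - a, by omega⟩

lemma Trail.split {ends : E → V × V} {a c w : V} {l : List E} {e : E}
    (h : Trail ends a c l) (he : e ∈ l) (hw : (ends e).1 = w ∨ (ends e).2 = w) :
    ∃ l1 l2, l = l1 ++ l2 ∧ Trail ends a w l1 ∧ Trail ends w c l2 := by
  induction h with
  | nil => simp at he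
  | cons hor ht hne ih =>
    rename_i a b c e' l
    rcases List.mem_cons.mp he with rfl | hmem
    · have hab : w = a ∨ w = b := by
        rcases hor with h | h <;> rw [h] at hw <;> simp at hw <;> tauto
      rcases hab with rfl | rfl
      · exact ⟨[], e :: l, rfl, Trail.nil w, Trail.cons hor ht hne⟩
      · exact ⟨[e], l, rfl, Trail.cons hor (Trail.nil w) List.not_mem_nil, ht⟩
    · obtain ⟨l1, l2, rfl, h1, h2⟩ := ih hmem
      refine ⟨e' :: l1, l2, rfl, Trail.cons hor h1 ?_, h2⟩
      exact fun hc => hne (List.mem_append.mpr (Or.inl hc))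

mutual
  /-- Edges in odd positions. -/
  def altO : List E → List E
    | [] => []
    | e :: l => e :: altE l
  /-- Edges in even positions. -/
  def altE : List E → List E
    | [] => []
    | _ :: l => altO l
end

lemma alt_sublist : ∀ l : List E, List.Sublist (altO l) l ∧ List.Sublist (altE l) l := by
  intro l
  induction l with
  | nil => simp [altO, altE]
  | cons e l ih =>
    refine ⟨?_, ?_⟩
    · rw [altO]; exact (ih.2).cons₂ e
    · rw [altE]; exact (ih.1).cons e

lemma alt_deg (ends : E → V × V) {a c : V} {l : List E} (h : Trail ends a c l) (v : V) :
    2 * (deg ends (altO l).toFinset v : ℤ) =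
      (deg ends l.toFinset v : ℤ) + (if a = v then 1 else 0)
        - (-1) ^ l.length * (if c = v then 1 else 0) ∧
    2 * (deg ends (altE l).toFinset v : ℤ) =
      (deg ends l.toFinset v : ℤ) - (if a = v then 1 else 0)
        + (-1) ^ l.length * (if c = v then 1 else 0) := by
  induction h with
  | nil w => simp [altO, altE, deg_empty]
  | cons hor ht hne ih =>
    rename_i a b c e l
    have hEsub : List.Sublist (altE l) l := (alt_sublist l).2
    have hOsub : List.Sublist (altO l) l := (alt_sublist l).1
    have hneE : e ∉ altE l := fun hc => hne (hEsub.subset hc)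
    have h1 : deg ends (altO (e :: l)).toFinset v = ind ends e v + deg ends (altE l).toFinset v := by
      rw [altO, List.toFinset_cons, deg_insert ends (by simpa using hneE)]
    have h2 : (altE (e :: l)) = altO l := rfl
    have h3 : deg ends (e :: l).toFinset v = ind ends e v + deg ends l.toFinset v := by
      rw [List.toFinset_cons, deg_insert ends (by simpa using hne)]
    have hind := ind_eq ends hor v
    constructor
    · rw [h1, h3, hind, List.length_cons, pow_succ]
      have := ih.2
      push_cast at this ⊢
      linarith [this]
    · rw [h2, h3, hind, List.length_cons, pow_succ]
      have := ih.1
      push_cast at this ⊢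
      linarith [this]

/-- Close up a trail inside an even-degree edge set `A`. -/
lemma close (ends : E → V × V) (A : Finset E) (hA : ∀ v, Even (deg ends A v)) :
    ∀ (k : ℕ) (b w : V) (l : List E), Trail ends b w l → l.toFinset ⊆ A →
      (A \ l.toFinset).card ≤ k →
      ∃ l', Trail ends w w l' ∧ l'.toFinset ⊆ A ∧ List.IsSuffix l l' := by
  intro k
  induction k with
  | zero =>
    intro b w l ht hsub hcard
    by_cases hbw : b = w
    · exact ⟨l, hbw ▸ ht, hsub, List.suffix_refl l⟩
    · exfalso
      have hwb : ¬ (w = b) := fun h => hbw h.symm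
      have hpar := ht.parity b
      have hb1 : (if b = b then 1 else 0) = 1 := if_pos rfl
      have hb2 : (if w = b then 1 else 0) = 0 := if_neg hwb
      rw [hb1, hb2, add_zero] at hpar
      have hAb := hA b
      have hAl : deg ends (A \ l.toFinset) b + deg ends l.toFinset b = deg ends A b := by
        have hd : Disjoint (A \ l.toFinset) l.toFinset := Finset.sdiff_disjoint
        rw [← deg_union ends hd, Finset.sdiff_union_of_subset hsub]
      have hpos : 0 < deg ends (A \ l.toFinset) b := by
        rcases hpar with ⟨r, hr⟩
        rcases hAb with ⟨s, hs⟩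
        omega
      obtain ⟨e, heA, _⟩ := exists_edge ends hpos
      have : e ∈ A \ l.toFinset := heA
      have hc : 0 < (A \ l.toFinset).card := Finset.card_pos.mpr ⟨e, this⟩
      omega
  | succ k ih =>
    intro b w l ht hsub hcard
    by_cases hbw : b = w
    · exact ⟨l, hbw ▸ ht, hsub, List.suffix_refl l⟩
    · have hwb : ¬ (w = b) := fun h => hbw h.symm
      have hpar := ht.parity b
      have hb1 : (if b = b then 1 else 0) = 1 := if_pos rfl
      have hb2 : (if w = b then 1 else 0) = 0 := if_neg hwb
      rw [hb1, hb2, add_zero] at hpar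
      have hAb := hA b
      have hAl : deg ends (A \ l.toFinset) b + deg ends l.toFinset b = deg ends A b := by
        have hd : Disjoint (A \ l.toFinset) l.toFinset := Finset.sdiff_disjoint
        rw [← deg_union ends hd, Finset.sdiff_union_of_subset hsub]
      have hpos : 0 < deg ends (A \ l.toFinset) b := by
        rcases hpar with ⟨r, hr⟩
        rcases hAb with ⟨s, hs⟩
        omega
      obtain ⟨e, heA, hend⟩ := exists_edge ends hpos
      rw [Finset.mem_sdiff] at heA
      have hel : e ∉ l := fun hc => heA.2 (List.mem_toFinset.mpr hc)
      set b' : V := if (ends e).1 = b then (ends e).2 else (ends e).1 with hb'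
      have hor : ends e = (b', b) ∨ ends e = (b, b') := by
        rcases hend with h | h
        · right; rw [hb', if_pos h]; exact Prod.ext h rfl
        · by_cases h1 : (ends e).1 = b
          · right; rw [hb', if_pos h1]; exact Prod.ext h1 rfl
          · left; rw [hb', if_neg h1]; exact Prod.ext rfl h
      have ht' : Trail ends b' w (e :: l) := Trail.cons hor ht hel
      have hsub' : (e :: l).toFinset ⊆ A := by
        rw [List.toFinset_cons]
        exact Finset.insert_subset heA.1 hsub
      have hcard' : (A \ (e :: l).toFinset).card ≤ k := by
        rw [List.toFinset_cons]
        have : A \ insert e l.toFinset = (A \ l.toFinset).erase e := by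
          ext x
          simp only [Finset.mem_sdiff, Finset.mem_insert, Finset.mem_erase]
          tauto
        rw [this, Finset.card_erase_of_mem (Finset.mem_sdiff.mpr heA)]
        omega
      obtain ⟨l', h1, h2, h3⟩ := ih b' w (e :: l) ht' hsub' hcard'
      exact ⟨l', h1, h2, (List.suffix_cons e l).trans h3⟩

lemma euler_aux (ends : E → V × V) (z : V)
    (hconn : ConnOn ends Finset.univ) :
    ∀ (k : ℕ) (M : List E), Trail ends z z M →
      (∀ v, Even (deg ends (Finset.univ \ M.toFinset) v)) →
      (Finset.univ \ M.toFinset).card ≤ k →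
      ∃ M', Trail ends z z M' ∧ M'.toFinset = Finset.univ := by
  intro k
  induction k with
  | zero =>
    intro M ht _ hcard
    refine ⟨M, ht, ?_⟩
    have h0 : Finset.univ \ M.toFinset = ∅ := Finset.card_eq_zero.mp (Nat.le_zero.mp hcard)
    apply Finset.Subset.antisymm (Finset.subset_univ _)
    intro x _
    by_contra hc
    have hx : x ∈ Finset.univ \ M.toFinset := Finset.mem_sdiff.mpr ⟨Finset.mem_univ x, hc⟩
    rw [h0] at hx
    simp at hx
  | succ k ih =>
    intro M ht hAeven hcard
    by_cases hall : Finset.univ \ M.toFinset = ∅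
    · refine ⟨M, ht, ?_⟩
      apply Finset.Subset.antisymm (Finset.subset_univ _)
      intro x _
      by_contra hc
      have : x ∈ Finset.univ \ M.toFinset := Finset.mem_sdiff.mpr ⟨Finset.mem_univ x, hc⟩
      simp [hall] at this
    · -- There is an unused edge; find one incident with a visited vertex.
      set A := Finset.univ \ M.toFinset with hA
      obtain ⟨e0, he0⟩ := Finset.nonempty_iff_ne_empty.mpr hall
      -- visited predicate
      have key : ∃ e ∈ A, ∃ w, ((ends e).1 = w ∨ (ends e).2 = w) ∧
          (w = z ∨ ∃ e2 ∈ M, (ends e2).1 = w ∨ (ends e2).2 = w) := by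
        by_contra hc
        push_neg at hc
        have hpres : ∀ x y : V,
            (x = z ∨ ∃ e2 ∈ M, (ends e2).1 = x ∨ (ends e2).2 = x) →
            adjOn ends Finset.univ x y →
            (y = z ∨ ∃ e2 ∈ M, (ends e2).1 = y ∨ (ends e2).2 = y) := by
          intro x y hx ⟨e, _, hor⟩
          by_cases heM : e ∈ M
          · right
            refine ⟨e, heM, ?_⟩
            rcases hor with h | h <;> rw [h] <;> simp
          · exfalso
            have heA : e ∈ A := Finset.mem_sdiff.mpr
              ⟨Finset.mem_univ e, fun hcc => heM (List.mem_toFinset.mp hcc)⟩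
            have h1 := hc e heA x (by rcases hor with h | h <;> rw [h] <;> simp)
            rcases hx with rfl | ⟨e2, he2, h2⟩
            · exact h1.1 rfl
            · rcases h2 with h2 | h2
              · exact (h1.2 e2 he2).1 h2
              · exact (h1.2 e2 he2).2 h2
        have hreach : ∀ x y : V, Relation.ReflTransGen (adjOn ends Finset.univ) x y →
            (x = z ∨ ∃ e2 ∈ M, (ends e2).1 = x ∨ (ends e2).2 = x) →
            (y = z ∨ ∃ e2 ∈ M, (ends e2).1 = y ∨ (ends e2).2 = y) := by
          intro x y hxy
          induction hxy with
          | refl => exact id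
          | tail _ hadj ih2 => exact fun hx => hpres _ _ (ih2 hx) hadj
        have he0A : e0 ∈ A := he0
        have hend := hc e0 he0A (ends e0).1 (Or.inl rfl)
        have hz := hreach z (ends e0).1 (hconn z (ends e0).1) (Or.inl rfl)
        rcases hz with rfl | ⟨e2, he2, h2⟩
        · exact hend.1 rfl
        · rcases h2 with h2 | h2
          · exact (hend.2 e2 he2).1 h2
          · exact (hend.2 e2 he2).2 h2
      obtain ⟨e, heA, w, hwend, hwvis⟩ := key
      rw [hA, Finset.mem_sdiff] at heA
      have hel : e ∉ M := fun hcc => heA.2 (List.mem_toFinset.mpr hcc)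
      -- even degrees on A
      -- seed trail [e] from u to w
      set u : V := if (ends e).1 = w then (ends e).2 else (ends e).1 with hu
      have hor : ends e = (u, w) ∨ ends e = (w, u) := by
        rcases hwend with h | h
        · right; rw [hu, if_pos h]; exact Prod.ext h rfl
        · by_cases h1 : (ends e).1 = w
          · right; rw [hu, if_pos h1]; exact Prod.ext h1 rfl
          · left; rw [hu, if_neg h1]; exact Prod.ext rfl h
      have hseed : Trail ends u w [e] :=
        Trail.cons hor (Trail.nil w) List.not_mem_nil
      have hseedsub : ([e] : List E).toFinset ⊆ A := by
        simp only [List.toFinset_cons, List.toFinset_nil, LawfulSingleton.insert_empty_eq]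
        exact Finset.singleton_subset_iff.mpr (Finset.mem_sdiff.mpr heA)
      obtain ⟨C, hC, hCsub, hCsuf⟩ := close ends A hAeven (A \ ([e] : List E).toFinset).card
        u w [e] hseed hseedsub le_rfl
      have heC : e ∈ C := hCsuf.subset (List.mem_singleton_self e)
      have hCnotM : ∀ x ∈ C, x ∉ M := by
        intro x hx hxM
        have : x ∈ A := hCsub (List.mem_toFinset.mpr hx)
        rw [hA, Finset.mem_sdiff] at this
        exact this.2 (List.mem_toFinset.mpr hxM)
      -- build the longer closed trail M'
      have hbig : ∃ M2, Trail ends z z M2 ∧ M.toFinset ⊆ M2.toFinset ∧ e ∈ M2 := by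
        rcases hwvis with rfl | ⟨e2, he2M, he2w⟩
        · refine ⟨C ++ M, hC.append ht (fun x hx => fun hxM => hCnotM x hx hxM), ?_, ?_⟩
          · intro x hx
            rw [List.toFinset_append]
            exact Finset.mem_union_right _ hx
          · exact List.mem_append.mpr (Or.inl heC)
        · obtain ⟨M1, M2, rfl, hM1, hM2⟩ := ht.split he2M he2w
          have hMnodup := ht.nodup
          rw [List.nodup_append] at hMnodup
          have hsplice : Trail ends w z (C ++ M2) :=
            hC.append hM2 (fun x hx hxM2 =>
              hCnotM x hx (List.mem_append.mpr (Or.inr hxM2)))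
          refine ⟨M1 ++ (C ++ M2), hM1.append hsplice ?_, ?_, ?_⟩
          · intro x hx
            rw [List.mem_append]
            rintro (hxC | hxM2)
            · exact hCnotM x hxC (List.mem_append.mpr (Or.inl hx))
            · exact hMnodup.2.2 x hx x hxM2 rfl
          · intro y hy
            simp only [List.toFinset_append, Finset.mem_union, List.mem_toFinset] at hy ⊢
            tauto
          · simp [heC]
      obtain ⟨M2, hM2t, hM2sub, heM2⟩ := hbig
      have hAeven' : ∀ v, Even (deg ends (Finset.univ \ M2.toFinset) v) := by
        intro v
        have h1 := deg_sdiff_add (S := M2.toFinset) ends v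
        have h2 := deg_sdiff_add (S := M.toFinset) ends v
        have hM2even : Even (deg ends M2.toFinset v) := even_of_parity (hM2t.parity v)
        have hMeven : Even (deg ends M.toFinset v) := even_of_parity (ht.parity v)
        have hsd1 := deg_sdiff_add (S := M.toFinset) ends v
        rw [← hA] at hsd1
        have hsd2 := deg_sdiff_add (S := M2.toFinset) ends v
        have huniv : Even (deg ends Finset.univ v) := by
          rcases hAeven v with ⟨r, hr⟩
          rcases hMeven with ⟨s, hs⟩
          exact ⟨r + s, by omega⟩
        rcases huniv with ⟨p, hp⟩
        rcases hM2even with ⟨q, hq⟩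
        exact ⟨p - q, by omega⟩
      have hcard' : (Finset.univ \ M2.toFinset).card ≤ k := by
        have hsubs : Finset.univ \ M2.toFinset ⊆ (Finset.univ \ M.toFinset).erase e := by
          intro x hx
          rw [Finset.mem_sdiff] at hx
          rw [Finset.mem_erase, Finset.mem_sdiff]
          refine ⟨?_, Finset.mem_univ x, ?_⟩
          · rintro rfl; exact hx.2 (List.mem_toFinset.mpr heM2)
          · exact fun hcc => hx.2 (hM2sub hcc)
        have hle := Finset.card_le_card hsubs
        rw [Finset.card_erase_of_mem (Finset.mem_sdiff.mpr heA)] at hle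
        rw [hA] at hcard
        omega
      exact ih M2 hM2t hAeven' hcard'

end EulerAux


theorem stmt1 {V E : Type} [Fintype V] [Fintype E] [DecidableEq V] [DecidableEq E]
    (ends : E → V × V) (z : V)
    (hconn : ConnOn ends Finset.univ)
    (heven : ∀ v : V, Even (deg ends Finset.univ v)) :
    ∃ H : Finset E,
      (∀ v : V, v ≠ z → deg ends H v = deg ends Finset.univ v / 2) ∧
      (deg ends H z = deg ends Finset.univ z / 2 ∨
        deg ends H z = deg ends Finset.univ z / 2 + 1) := by
  classical
  open EulerAux in
  -- Get an Euler closed trail at z.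
  obtain ⟨M, hM, hMuniv⟩ := euler_aux ends z hconn (Finset.univ \ ([] : List E).toFinset).card
    [] (Trail.nil z) (by simpa using heven) le_rfl
  refine ⟨(altO M).toFinset, ?_, ?_⟩
  · intro v hvz
    have hkey := (alt_deg ends hM v).1
    rw [hMuniv, if_neg (fun h => hvz h.symm)] at hkey
    simp only [mul_zero, add_zero, sub_zero] at hkey
    have h2 : 2 * deg ends (altO M).toFinset v = deg ends Finset.univ v := by
      exact_mod_cast hkey
    omega
  · have hkey := (alt_deg ends hM z).1
    rw [hMuniv, if_pos rfl] at hkey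
    obtain ⟨r, hr⟩ := heven z
    rcases Nat.even_or_odd M.length with hpar | hpar
    · rw [hpar.neg_one_pow] at hkey
      have h2 : 2 * deg ends (altO (E := E) M).toFinset z = deg ends Finset.univ z := by
        have : (2 : ℤ) * (deg ends (altO M).toFinset z : ℤ) = (deg ends Finset.univ z : ℤ) := by
          linarith [hkey]
        exact_mod_cast this
      left; omega
    · rw [hpar.neg_one_pow] at hkey
      have h2 : 2 * deg ends (altO (E := E) M).toFinset z = deg ends Finset.univ z + 2 := by
        have : (2 : ℤ) * (deg ends (altO M).toFinset z : ℤ) =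
            (deg ends Finset.univ z : ℤ) + 2 := by linarith [hkey]
        exact_mod_cast this
      right; omega
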